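/- Let ρ > 0, let ν be a compactly supported probability measure on [0,∞), and suppose γ_x, γ_z, q_x, q̂_x ∈ ℝ satisfy: (i) γ_z ≥ 0; (ii) q̂_x = q_x/(ρ(ρ−q_x)) − γ_x with 0 ≤ q_x < ρ; and (iii) q_x ≥ ρ²q̂_x/(1+ρq̂_x) with 1+ρq̂_x > 0. Then γ_x ≥ 0, and consequently 1/ρ + γ_x + γ_z·λ_min ≥ 1/ρ > 0 for any λ_min ≥ 0. -/

import Mathlib

open MeasureTheory Set

/-- No-saturation argument: if `γ_z ≥ 0`, `q̂_x = q_x/(ρ(ρ−q_x)) − γ_x` with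
`0 ≤ q_x < ρ`, and `q_x ≥ ρ²q̂_x/(1+ρq̂_x)` with `1+ρq̂_x > 0`, then `γ_x ≥ 0`,
and consequently `1/ρ + γ_x + γ_z λ_min ≥ 1/ρ > 0` for any `λ_min ≥ 0`. -/
theorem no_saturation
    (ρ : ℝ) (hρ : 0 < ρ)
    (ν : Measure ℝ) [IsProbabilityMeasure ν]
    (hsupp : ∃ C : ℝ, ν (Icc (0:ℝ) C)ᶜ = 0)
    (γx γz qx qhatx : ℝ)
    (hγz : 0 ≤ γz)
    (hqx0 : 0 ≤ qx) (hqxρ : qx < ρ)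
    (hfix : qhatx = qx / (ρ * (ρ - qx)) - γx)
    (hden : 0 < 1 + ρ * qhatx)
    (hbound : ρ ^ 2 * qhatx / (1 + ρ * qhatx) ≤ qx) :
    0 ≤ γx ∧ ∀ lmin : ℝ, 0 ≤ lmin →
      1 / ρ ≤ 1 / ρ + γx + γz * lmin ∧ 0 < (1 / ρ : ℝ) := by
  have h1 : 0 < ρ * (ρ - qx) := mul_pos hρ (by linarith)
  have h2 : ρ ^ 2 * qhatx ≤ qx * (1 + ρ * qhatx) := (div_le_iff₀ hden).mp hbound
  have h3 : qhatx * (ρ * (ρ - qx)) = qx - γx * (ρ * (ρ - qx)) := by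
    rw [hfix, sub_mul, div_mul_cancel₀ _ (ne_of_gt h1)]
  have hγx : 0 ≤ γx := by nlinarith
  exact ⟨hγx, fun lmin hl => ⟨by nlinarith, by positivity⟩⟩
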